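/- There exists an absolute constant λ > 0 such that: if P(x) = ((⋯(x^2 - c_1)^2 ⋯)^2 - c_k ∈ ℤ[x] splits into linear factors over ℤ, k ≥ 3, and c_k > 0, then ln(c_j) > λ · k · 2^j for all j with 1 ≤ j ≤ k. -/
import Mathlib

open Polynomial

noncomputable def chain (c : ℕ → ℤ) : ℕ → Polynomial ℤ
  | 0 => X
  | j + 1 => (chain c j) ^ 2 - C (c (j + 1))

def Crumbles (P : Polynomial ℤ) : Prop :=
  ∃ s : Multiset (Polynomial ℤ), (∀ q ∈ s, q.degree = 1) ∧ P = s.prod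
namespace SC

lemma chain_natDegree (c : ℕ → ℤ) : ∀ k, (chain c k).natDegree = 2 ^ k
  | 0 => by simp [chain]
  | (k+1) => by
    have ih := chain_natDegree c k
    show ((chain c k) ^ 2 - C (c (k+1))).natDegree = 2 ^ (k+1)
    rw [natDegree_sub_C, natDegree_pow, ih]
    ring

lemma chain_monic (c : ℕ → ℤ) : ∀ k, (chain c k).Monic
  | 0 => monic_X
  | (k+1) => by
    have h := (chain_monic c k).pow 2
    refine h.sub_of_left (lt_of_le_of_lt degree_C_le ?_)
    rw [degree_eq_natDegree h.ne_zero]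
    have : (chain c k ^ 2).natDegree = 2 ^ (k+1) := by
      rw [natDegree_pow, chain_natDegree]; ring
    rw [this]
    exact_mod_cast pow_pos (by norm_num : (0:ℕ) < 2) (k+1)

lemma monic_chain_sub_C (c : ℕ → ℤ) (k : ℕ) (t : ℤ) : (chain c k - C t).Monic := by
  refine (chain_monic c k).sub_of_left (lt_of_le_of_lt degree_C_le ?_)
  rw [degree_eq_natDegree (chain_monic c k).ne_zero, chain_natDegree]
  exact_mod_cast pow_pos (by norm_num : (0:ℕ) < 2) k

lemma crumbles_one : Crumbles 1 := ⟨0, by simp, by simp⟩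

/-- Normalization: a monic crumbling polynomial is a product of `X - C r`. -/
lemma crumbles_normalize {P : Polynomial ℤ} (hP : Crumbles P) (hm : P.Monic) :
    ∃ T : Multiset ℤ, P = (T.map (fun r => X - C r)).prod := by
  obtain ⟨s, hdeg, hprod⟩ := hP
  have hlc : ∀ q ∈ s, IsUnit q.leadingCoeff := by
    intro q hq
    have h1 : q.leadingCoeff ∣ (s.map leadingCoeff).prod :=
      Multiset.dvd_prod (Multiset.mem_map_of_mem _ hq)
    rw [← leadingCoeff_multiset_prod, ← hprod, hm.leadingCoeff] at h1
    exact isUnit_of_dvd_one h1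
  refine ⟨s.map (fun q => -(q.coeff 0 * q.coeff 1)), ?_⟩
  rw [Multiset.map_map]
  have hkey : ∀ q ∈ s, (X - C (-(q.coeff 0 * q.coeff 1))) = C (q.coeff 1) * q := by
    intro q hq
    have hd1 : q.degree = 1 := hdeg q hq
    have hnd : q.natDegree = 1 := natDegree_eq_of_degree_eq_some hd1
    have hrep : q = C (q.coeff 1) * X + C (q.coeff 0) :=
      eq_X_add_C_of_degree_le_one (le_of_eq hd1)
    have hu : IsUnit (q.coeff 1) := by
      have : q.leadingCoeff = q.coeff 1 := by rw [leadingCoeff, hnd]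
      rw [← this]; exact hlc q hq
    have hsq : q.coeff 1 * q.coeff 1 = 1 := by
      rcases Int.isUnit_iff.mp hu with h | h <;> rw [h] <;> norm_num
    calc X - C (-(q.coeff 0 * q.coeff 1))
        = C (q.coeff 1 * q.coeff 1) * X + C (q.coeff 1 * q.coeff 0) := by
          rw [hsq, mul_comm (q.coeff 1) (q.coeff 0), C_1, one_mul, map_neg,
            sub_neg_eq_add]
      _ = C (q.coeff 1) * (C (q.coeff 1) * X + C (q.coeff 0)) := by
          rw [C_mul, C_mul]; ring
      _ = C (q.coeff 1) * q := by rw [← hrep]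
  have hone : (s.map (fun q => q.coeff 1)).prod = 1 := by
    have h2 : s.map (fun q => q.coeff 1) = s.map leadingCoeff := by
      apply Multiset.map_congr rfl
      intro q hq
      have hnd : q.natDegree = 1 := natDegree_eq_of_degree_eq_some (hdeg q hq)
      rw [leadingCoeff, hnd]
    rw [h2, ← leadingCoeff_multiset_prod, ← hprod, hm.leadingCoeff]
  calc P = C ((s.map (fun q => q.coeff 1)).prod) * s.prod := by
        rw [hone, map_one, one_mul, hprod]
    _ = (s.map (fun q => C (q.coeff 1))).prod * (s.map (fun q => q)).prod := by
        rw [map_multiset_prod (C : ℤ →+* Polynomial ℤ), Multiset.map_map, Multiset.map_id']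
        rfl
    _ = (s.map (fun q => C (q.coeff 1) * q)).prod := (Multiset.prod_map_mul).symm
    _ = (s.map (fun q => X - C (-(q.coeff 0 * q.coeff 1)))).prod := by
        refine congrArg Multiset.prod (Multiset.map_congr rfl ?_).symm
        exact hkey

lemma crumbles_of_dvd_aux : ∀ (n : ℕ) (f : Polynomial ℤ), f.natDegree ≤ n → f.Monic →
    ∀ T : Multiset ℤ, f ∣ (T.map (fun r => X - C r)).prod → Crumbles f := by
  intro n
  induction n with
  | zero =>
    intro f hd hm T _
    have : f = 1 := hm.natDegree_eq_zero.mp (Nat.le_zero.mp hd)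
    rw [this, Crumbles]
    exact ⟨0, by simp, by simp⟩
  | succ n ih =>
    intro f hd hm T hdvd
    by_cases h0 : f.natDegree = 0
    · have : f = 1 := hm.natDegree_eq_zero.mp h0
      rw [this, Crumbles]
      exact ⟨0, by simp, by simp⟩
    · have hfne : f ≠ 0 := hm.ne_zero
      have hfnu : ¬IsUnit f := by
        intro hu
        exact h0 (natDegree_eq_zero_of_isUnit hu)
      obtain ⟨p, hpirr, hpdvd⟩ := WfDvdMonoid.exists_irreducible_factor hfnu hfne
      have hpprime : Prime p := UniqueFactorizationMonoid.irreducible_iff_prime.mp hpirr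
      obtain ⟨a, ha, hpa⟩ := hpprime.exists_mem_multiset_dvd (hpdvd.trans hdvd)
      obtain ⟨r, hrT, rfl⟩ := Multiset.mem_map.mp ha
      have hXr : (X - C r) ∣ f := by
        have hassoc : Associated p (X - C r) :=
          hpirr.associated_of_dvd (Polynomial.prime_X_sub_C r).irreducible hpa
        exact hassoc.symm.dvd.trans hpdvd
      obtain ⟨g, hg⟩ := hXr
      have hgm : g.Monic := (monic_X_sub_C r).of_mul_monic_left (hg ▸ hm)
      have hdegf : f.natDegree = 1 + g.natDegree := by
        rw [hg, natDegree_mul (X_sub_C_ne_zero r) hgm.ne_zero, natDegree_X_sub_C]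
      have hgdvd : g ∣ ((T.erase r).map (fun r => X - C r)).prod := by
        have hTp : (X - C r) * ((T.erase r).map (fun r => X - C r)).prod
            = (T.map (fun r => X - C r)).prod := Multiset.prod_map_erase (f := fun r => X - C r) hrT
        rw [hg] at hdvd
        rw [← hTp] at hdvd
        exact (mul_dvd_mul_iff_left (X_sub_C_ne_zero r)).mp hdvd
      have hCg : Crumbles g := by
        refine ih g ?_ hgm _ hgdvd
        omega
      rw [Crumbles] at hCg ⊢
      obtain ⟨s', hs'deg, hs'prod⟩ := hCg
      exact ⟨(X - C r) ::ₘ s', by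
        intro q hq
        rcases Multiset.mem_cons.mp hq with h | h
        · rw [h]; exact degree_X_sub_C r
        · exact hs'deg q h, by rw [Multiset.prod_cons, hg, hs'prod]⟩


lemma crumbles_of_dvd {P f : Polynomial ℤ} (hP : Crumbles P) (hPm : P.Monic)
    (hfm : f.Monic) (hdvd : f ∣ P) : Crumbles f := by
  obtain ⟨T, hT⟩ := crumbles_normalize hP hPm
  exact crumbles_of_dvd_aux f.natDegree f le_rfl hfm T (hT ▸ hdvd)

lemma crumbles_root {P : Polynomial ℤ} (hP : Crumbles P) (hPm : P.Monic)
    (hdeg : P.natDegree ≠ 0) : ∃ r : ℤ, P.eval r = 0 := by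
  obtain ⟨T, hT⟩ := crumbles_normalize hP hPm
  rcases Multiset.empty_or_exists_mem T with h | ⟨r, hr⟩
  · exfalso; apply hdeg; rw [hT, h]; simp
  · refine ⟨r, ?_⟩
    have : (X - C r) ∣ P := by
      rw [hT]
      exact Multiset.dvd_prod (Multiset.mem_map_of_mem _ hr)
    exact (dvd_iff_isRoot.mp this : P.IsRoot r)

/-- The arithmetic shadow of crumbling: all nested radicals are integers. -/
def Good (c : ℕ → ℤ) : ℕ → ℤ → Prop
  | 0, _ => True
  | (l+1), t => ∃ s : ℤ, 0 ≤ s ∧ s ^ 2 = c (l+1) + t ∧ Good c l s ∧ Good c l (-s)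

lemma good_of_crumbles (c : ℕ → ℤ) : ∀ (l : ℕ) (t : ℤ),
    Crumbles (chain c l - C t) → Good c l t := by
  intro l
  induction l with
  | zero => intro t _; trivial
  | succ l ih =>
    intro t hcr
    have hchain : chain c (l+1) - C t = (chain c l) ^ 2 - C (c (l+1) + t) := by
      show (chain c l) ^ 2 - C (c (l+1)) - C t = _
      rw [C_add]; ring
    have hm : (chain c (l+1) - C t).Monic := monic_chain_sub_C c (l+1) t
    have hnd : (chain c (l+1) - C t).natDegree ≠ 0 := by
      rw [natDegree_sub_C, chain_natDegree]
      positivity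
    obtain ⟨r, hr⟩ := crumbles_root hcr hm hnd
    set s : ℤ := |(chain c l).eval r| with hs
    have hs0 : 0 ≤ s := abs_nonneg _
    have hs2 : s ^ 2 = c (l+1) + t := by
      rw [hs, sq_abs]
      have := hr
      rw [hchain] at this
      simp only [eval_sub, eval_pow, eval_C] at this
      linarith
    have hfact : chain c (l+1) - C t = (chain c l - C s) * (chain c l + C s) := by
      rw [hchain]
      have : (C (c (l+1) + t) : Polynomial ℤ) = C (s ^ 2) := by rw [hs2]
      rw [this, map_pow]
      ring
    refine ⟨s, hs0, hs2, ?_, ?_⟩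
    · apply ih
      apply crumbles_of_dvd hcr hm (monic_chain_sub_C c l s)
      rw [hfact]
      exact Dvd.intro _ rfl
    · apply ih
      have : chain c l - C (-s) = chain c l + C s := by rw [map_neg]; ring
      rw [this]
      apply crumbles_of_dvd hcr hm
      · rw [← this]; exact monic_chain_sub_C c l (-s)
      · rw [hfact]
        exact Dvd.intro_left _ rfl

lemma good_sqrt {c : ℕ → ℤ} {n : ℕ} {t : ℤ} (h : Good c (n+1) t) :
    0 ≤ Int.sqrt (c (n+1) + t) ∧ (Int.sqrt (c (n+1) + t)) ^ 2 = c (n+1) + t ∧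
    Good c n (Int.sqrt (c (n+1) + t)) ∧ Good c n (-(Int.sqrt (c (n+1) + t))) := by
  obtain ⟨s, hs0, hs2, hg1, hg2⟩ := h
  have hh : Int.sqrt (c (n+1) + t) = s := by
    rw [← hs2, sq, Int.sqrt_eq, Int.natAbs_of_nonneg hs0]
  rw [hh]
  exact ⟨hs0, hs2, hg1, hg2⟩

/-- Achievable values at depth `i` below the top of a chain of length `k`. -/
def lev (c : ℕ → ℤ) (k : ℕ) : ℕ → Finset ℤ
  | 0 => {0}
  | (i+1) => (lev c k i).biUnion
      (fun u => {Int.sqrt (c (k - i) + u), - Int.sqrt (c (k - i) + u)})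

lemma lev_good {c : ℕ → ℤ} {k : ℕ} (hg : Good c k 0) :
    ∀ i, i ≤ k → ∀ u ∈ lev c k i, Good c (k - i) u ∧ Good c (k - i) (-u) := by
  intro i
  induction i with
  | zero =>
    intro _ u hu
    have : u = 0 := by simpa [lev] using hu
    subst this
    refine ⟨?_, ?_⟩ <;> simp only [Nat.sub_zero, neg_zero] <;> exact hg
  | succ i ih =>
    intro hik u hu
    obtain ⟨v, hv, huv⟩ := Finset.mem_biUnion.mp hu
    have hkk : k - i = (k - (i+1)) + 1 := by omega
    have hIH : Good c ((k - (i+1)) + 1) v := by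
      rw [← hkk]; exact (ih (by omega) v hv).1
    have hq := good_sqrt hIH
    rw [← hkk] at hq
    rcases Finset.mem_insert.mp huv with h | h
    · subst h; exact ⟨hq.2.2.1, hq.2.2.2⟩
    · have : u = - Int.sqrt (c (k - i) + v) := by simpa using h
      subst this
      exact ⟨hq.2.2.2, by rw [neg_neg]; exact hq.2.2.1⟩

lemma lev_sq {c : ℕ → ℤ} {k : ℕ} (hg : Good c k 0) {i : ℕ} (hik : i + 1 ≤ k) :
    ∀ u ∈ lev c k (i+1), ∃ v ∈ lev c k i, u ^ 2 = c (k - i) + v := by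
  intro u hu
  obtain ⟨v, hv, huv⟩ := Finset.mem_biUnion.mp hu
  refine ⟨v, hv, ?_⟩
  have hkk : k - i = (k - (i+1)) + 1 := by omega
  have hIH : Good c ((k - (i+1)) + 1) v := by
    rw [← hkk]; exact (lev_good hg i (by omega) v hv).1
  have hq := good_sqrt hIH
  rw [← hkk] at hq
  rcases Finset.mem_insert.mp huv with h | h
  · subst h; exact hq.2.1
  · have : u = - Int.sqrt (c (k - i) + v) := by simpa using h
    subst this
    rw [neg_sq]; exact hq.2.1

lemma le_c_of_lev {c : ℕ → ℤ} {k : ℕ} (hg : Good c k 0) {i : ℕ} (hik : i < k)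
    {u : ℤ} (hu : u ∈ lev c k i) (hu0 : 0 ≤ u) : u ≤ c (k - i) := by
  have hkk : k - i = (k - (i+1)) + 1 := by omega
  have hG : Good c ((k - (i+1)) + 1) (-u) := by
    rw [← hkk]; exact (lev_good hg i (by omega) u hu).2
  obtain ⟨s, _, hs2, _, _⟩ := hG
  rw [← hkk] at hs2
  nlinarith [sq_nonneg s]

lemma lev_sqrt_sq {c : ℕ → ℤ} {k : ℕ} (hg : Good c k 0) {i : ℕ} (hik : i + 1 ≤ k)
    {v : ℤ} (hv : v ∈ lev c k i) :
    (Int.sqrt (c (k - i) + v)) ^ 2 = c (k - i) + v := by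
  have hkk : k - i = (k - (i+1)) + 1 := by omega
  have hIH : Good c ((k - (i+1)) + 1) v := by
    rw [← hkk]; exact (lev_good hg i (by omega) v hv).1
  have hq := good_sqrt hIH
  rw [← hkk] at hq
  exact hq.2.1

lemma lev_card_step {c : ℕ → ℤ} {k : ℕ} (hg : Good c k 0) {i : ℕ} (hik : i + 1 ≤ k) :
    2 * (lev c k i).card ≤ (lev c k (i+1)).card + 1 := by
  classical
  set f : ℤ → ℤ := fun v => Int.sqrt (c (k - i) + v) with hf
  have hinj : ∀ v ∈ lev c k i, ∀ v' ∈ lev c k i, f v = f v' → v = v' := by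
    intro v hv v' hv' h
    have h1 := lev_sqrt_sq hg hik hv
    have h2 := lev_sqrt_sq hg hik hv'
    have : c (k - i) + v = c (k - i) + v' := by
      rw [← h1, ← h2]
      show f v ^ 2 = f v' ^ 2
      rw [h]
    linarith
  set A : Finset ℤ := (lev c k i).image f with hA
  set B : Finset ℤ := (lev c k i).image (fun v => - f v) with hB
  have hAcard : A.card = (lev c k i).card := Finset.card_image_of_injOn hinj
  have hBcard : B.card = (lev c k i).card := by
    apply Finset.card_image_of_injOn
    intro v hv v' hv' h
    exact hinj v hv v' hv' (by linarith [neg_inj.mp h])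
  have hsub : A ∪ B ⊆ lev c k (i+1) := by
    intro x hx
    rcases Finset.mem_union.mp hx with hx | hx
    · obtain ⟨v, hv, rfl⟩ := Finset.mem_image.mp hx
      exact Finset.mem_biUnion.mpr ⟨v, hv, Finset.mem_insert_self _ _⟩
    · obtain ⟨v, hv, rfl⟩ := Finset.mem_image.mp hx
      exact Finset.mem_biUnion.mpr ⟨v, hv,
        Finset.mem_insert.mpr (Or.inr (Finset.mem_singleton_self _))⟩
  have hint : (A ∩ B).card ≤ 1 := by
    have : A ∩ B ⊆ {0} := by
      intro x hx
      obtain ⟨hxA, hxB⟩ := Finset.mem_inter.mp hx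
      obtain ⟨v, hv, rfl⟩ := Finset.mem_image.mp hxA
      obtain ⟨v', hv', he⟩ := Finset.mem_image.mp hxB
      have h1 : 0 ≤ f v := Int.sqrt_nonneg _
      have h2 : 0 ≤ f v' := Int.sqrt_nonneg _
      have : f v = 0 := by omega
      simp [this]
    calc (A ∩ B).card ≤ ({0} : Finset ℤ).card := Finset.card_le_card this
      _ = 1 := Finset.card_singleton _
  have := Finset.card_union_add_card_inter A B
  have hle := Finset.card_le_card hsub
  omega

lemma lev_neg {c : ℕ → ℤ} {k : ℕ} : ∀ i, ∀ u ∈ lev c k i, -u ∈ lev c k i := by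
  intro i
  induction i with
  | zero =>
    intro u hu
    have : u = 0 := by simpa [lev] using hu
    subst this; simpa [lev]
  | succ i ih =>
    intro u hu
    obtain ⟨v, hv, huv⟩ := Finset.mem_biUnion.mp hu
    rcases Finset.mem_insert.mp huv with h | h
    · subst h
      exact Finset.mem_biUnion.mpr ⟨v, hv,
        Finset.mem_insert.mpr (Or.inr (Finset.mem_singleton_self _))⟩
    · have : u = - Int.sqrt (c (k - i) + v) := by simpa using h
      subst this
      rw [neg_neg]
      exact Finset.mem_biUnion.mpr ⟨v, hv, Finset.mem_insert_self _ _⟩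

lemma lev_card {c : ℕ → ℤ} {k : ℕ} (hg : Good c k 0) (hck : 1 ≤ c k) :
    ∀ i, 1 ≤ i → i ≤ k → 2 ^ (i - 1) + 1 ≤ (lev c k i).card := by
  intro i
  induction i with
  | zero => intro h; omega
  | succ i ih =>
    intro _ hik
    rcases Nat.eq_zero_or_pos i with rfl | hi
    · -- i+1 = 1
      obtain ⟨n, hn⟩ : ∃ n, k = n + 1 := ⟨k - 1, by omega⟩
      have hgk : Good c (n+1) 0 := by rw [← hn]; exact hg
      obtain ⟨s, hs0, hs2, _, _⟩ := hgk
      have hs1 : 1 ≤ s := by nlinarith [hck, hn ▸ hs2]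
      have hm : Int.sqrt (c (k - 0) + 0) = s := by
        have : c (k - 0) + 0 = s ^ 2 := by
          rw [Nat.sub_zero, add_zero, hn]; omega
        rw [this, sq, Int.sqrt_eq, Int.natAbs_of_nonneg hs0]
      have hmem : s ∈ lev c k 1 ∧ -s ∈ lev c k 1 := by
        constructor
        · exact Finset.mem_biUnion.mpr ⟨0, by simp [lev], by rw [← hm]; exact Finset.mem_insert_self _ _⟩
        · exact Finset.mem_biUnion.mpr ⟨0, by simp [lev], by
            rw [← hm]; exact Finset.mem_insert.mpr (Or.inr (Finset.mem_singleton_self _))⟩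
      have hsub : ({s, -s} : Finset ℤ) ⊆ lev c k 1 := by
        intro x hx
        rcases Finset.mem_insert.mp hx with h | h
        · subst h; exact hmem.1
        · rw [Finset.mem_singleton.mp h]; exact hmem.2
      have h2 : ({s, -s} : Finset ℤ).card = 2 := by
        rw [Finset.card_insert_of_notMem (by
          intro hmem2
          have := Finset.mem_singleton.mp hmem2
          omega), Finset.card_singleton]
      have := Finset.card_le_card hsub
      simpa using by omega
    · have h1 := ih (by omega) (by omega)
      have h2 := lev_card_step hg (i := i) (by omega)
      have h3 : 2 ^ (i + 1 - 1) = 2 * 2 ^ (i - 1) := by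
        rw [Nat.add_sub_cancel, ← pow_succ']
        congr 1
        omega
      omega

/-- Nonnegative achievable values. -/
def Wlev (c : ℕ → ℤ) (k i : ℕ) : Finset ℤ := (lev c k i).filter (fun u => 0 ≤ u)

lemma Wlev_card {c : ℕ → ℤ} {k : ℕ} (hg : Good c k 0) (hck : 1 ≤ c k)
    {i : ℕ} (h2 : 2 ≤ i) (hik : i ≤ k) : 2 ^ (i - 2) + 1 ≤ (Wlev c k i).card := by
  classical
  have hsub : lev c k i ⊆ Wlev c k i ∪ (Wlev c k i).image (fun x => -x) := by
    intro u hu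
    by_cases h : 0 ≤ u
    · exact Finset.mem_union_left _ (Finset.mem_filter.mpr ⟨hu, h⟩)
    · refine Finset.mem_union_right _ (Finset.mem_image.mpr ⟨-u, ?_, by ring⟩)
      exact Finset.mem_filter.mpr ⟨lev_neg i u hu, by omega⟩
  have hcard := Finset.card_le_card hsub
  have hcard2 := Finset.card_union_le (Wlev c k i) ((Wlev c k i).image (fun x => -x))
  have hcard3 := Finset.card_image_le (s := Wlev c k i) (f := fun x : ℤ => -x)
  have hlev := lev_card hg hck i (by omega) hik
  have h3 : 2 ^ (i - 1) = 2 * 2 ^ (i - 2) := by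
    rw [← pow_succ']
    congr 1
    omega
  omega

/-- The all-plus nested radical map. -/
def Rad (c : ℕ → ℤ) : ℕ → ℤ → ℤ
  | 0, t => t
  | (l+1), t => Rad c l (Int.sqrt (c (l+1) + t))

lemma Rad_lip (c : ℕ → ℤ) : ∀ (l : ℕ), (∀ j, 1 ≤ j → j ≤ l → 1 ≤ c j) →
    ∀ t t' : ℤ, Good c l t → Good c l t' → 0 ≤ t → t ≤ t' →
    Rad c l t ≤ Rad c l t' ∧ (t < t' → Rad c l t < Rad c l t') ∧
    (Rad c l t' - Rad c l t)^2 * ∏ j ∈ Finset.Icc 1 l, (4 * c j) ≤ (t' - t)^2 := by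
  intro l
  induction l with
  | zero =>
    intro _ t t' _ _ _ hle
    refine ⟨hle, fun h => h, ?_⟩
    show (t' - t)^2 * ∏ j ∈ Finset.Icc 1 0, (4 * c j) ≤ (t' - t)^2
    rw [Finset.Icc_eq_empty (by omega), Finset.prod_empty, mul_one]
  | succ l ih =>
    intro hc t t' hgt hgt' h0 hle
    obtain ⟨s, hs0, hs2, hgs, _⟩ := hgt
    obtain ⟨s', hs'0, hs'2, hgs', _⟩ := hgt'
    have h0' : 0 ≤ t' := le_trans h0 hle
    have hrt : Rad c (l+1) t = Rad c l s := by
      show Rad c l (Int.sqrt (c (l+1) + t)) = _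
      rw [← hs2, sq, Int.sqrt_eq, Int.natAbs_of_nonneg hs0]
    have hrt' : Rad c (l+1) t' = Rad c l s' := by
      show Rad c l (Int.sqrt (c (l+1) + t')) = _
      rw [← hs'2, sq, Int.sqrt_eq, Int.natAbs_of_nonneg hs'0]
    have hsq : s ^ 2 ≤ s' ^ 2 := by rw [hs2, hs'2]; linarith
    have hss : s ≤ s' := by nlinarith
    have ih' := ih (fun j hj1 hj2 => hc j hj1 (by omega)) s s' hgs hgs' hs0 hss
    have hprod : ∏ j ∈ Finset.Icc 1 (l+1), (4 * c j)
        = (∏ j ∈ Finset.Icc 1 l, (4 * c j)) * (4 * c (l+1)) := by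
      rw [Finset.prod_Icc_succ_top (by omega)]
    refine ⟨by rw [hrt, hrt']; exact ih'.1, ?_, ?_⟩
    · intro hlt
      rw [hrt, hrt']
      apply ih'.2.1
      have hsqlt : s ^ 2 < s' ^ 2 := by rw [hs2, hs'2]; linarith
      by_contra hcon
      push_neg at hcon
      nlinarith
    · rw [hrt, hrt', hprod, ← mul_assoc]
      have hc4 : (0:ℤ) ≤ 4 * c (l+1) := by
        have := hc (l+1) (by omega) le_rfl; linarith
      have hcs : c (l+1) ≤ s ^ 2 := by rw [hs2]; linarith
      have hmid : 4 * c (l+1) ≤ (s + s')^2 := by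
        nlinarith [mul_nonneg (sub_nonneg.mpr hss) (by linarith : (0:ℤ) ≤ s' + 3*s)]
      calc (Rad c l s' - Rad c l s)^2 * (∏ j ∈ Finset.Icc 1 l, (4 * c j)) * (4 * c (l+1))
          ≤ (s' - s)^2 * (4 * c (l+1)) := mul_le_mul_of_nonneg_right ih'.2.2 hc4
        _ ≤ (s' - s)^2 * (s + s')^2 := mul_le_mul_of_nonneg_left hmid (sq_nonneg _)
        _ = (s'^2 - s^2)^2 := by ring
        _ = (t' - t)^2 := by rw [hs2, hs'2]; ring

lemma c_lower {c : ℕ → ℤ} {k : ℕ} (hg : Good c k 0) (hck : 1 ≤ c k)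
    {j : ℕ} (hj1 : 1 ≤ j) (hj2 : j + 2 ≤ k) : (2:ℤ) ^ (k - j - 2) ≤ c j := by
  classical
  set i := k - j with hi
  have h2i : 2 ≤ i := by omega
  have hik : i ≤ k := by omega
  have hWcard := Wlev_card hg hck h2i hik
  have hne : (Wlev c k i).Nonempty :=
    Finset.card_pos.mp (lt_of_lt_of_le (Nat.succ_pos _) hWcard)
  set M := (Wlev c k i).max' hne with hM
  have hMW : M ∈ Wlev c k i := (Wlev c k i).max'_mem hne
  have hMlev : M ∈ lev c k i := (Finset.mem_filter.mp hMW).1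
  have hM0 : 0 ≤ M := (Finset.mem_filter.mp hMW).2
  have hMc : M ≤ c (k - i) := le_c_of_lev hg (by omega) hMlev hM0
  have hkij : k - i = j := by omega
  rw [hkij] at hMc
  have hsub : Wlev c k i ⊆ Finset.Icc 0 M := by
    intro u hu
    exact Finset.mem_Icc.mpr ⟨(Finset.mem_filter.mp hu).2, Finset.le_max' _ u hu⟩
  have hcard := Finset.card_le_card hsub
  rw [Int.card_Icc] at hcard
  have hcard2 : (2 ^ (i - 2) + 1 : ℕ) ≤ (M + 1 - 0).toNat := le_trans hWcard hcard
  have hcard3 : ((2 ^ (i - 2) + 1 : ℕ) : ℤ) ≤ M + 1 - 0 :=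
    (Int.le_toNat (by linarith)).mp hcard2
  have hfin : (2:ℤ) ^ (i - 2) ≤ M := by push_cast at hcard3; linarith
  have : i - 2 = k - j - 2 := by omega
  rw [this] at hfin
  linarith

lemma c_one_le {c : ℕ → ℤ} {k : ℕ} (hg : Good c k 0) (hck : 1 ≤ c k)
    {j : ℕ} (hj1 : 1 ≤ j) (hj2 : j + 2 ≤ k) : 1 ≤ c j :=
  le_trans (one_le_pow₀ (by norm_num)) (c_lower hg hck hj1 hj2)

lemma star {c : ℕ → ℤ} {k : ℕ} (hg : Good c k 0) (hck : 1 ≤ c k)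
    {i : ℕ} (h2 : 2 ≤ i) (hik : i + 1 ≤ k) :
    ∃ M : ℤ, M ∈ lev c k i ∧ 0 ≤ M ∧ M ≤ c (k - i) ∧
      ((2:ℤ) ^ (i - 2)) ^ 2 * ∏ j ∈ Finset.Icc 1 (k - i), (4 * c j) ≤ M ^ 2 := by
  classical
  have hWcard := Wlev_card hg hck h2 (by omega)
  have hne : (Wlev c k i).Nonempty :=
    Finset.card_pos.mp (lt_of_lt_of_le (Nat.succ_pos _) hWcard)
  set W := Wlev c k i with hW
  set M := W.max' hne with hM
  have hMW : M ∈ W := W.max'_mem hne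
  have hMlev : M ∈ lev c k i := (Finset.mem_filter.mp hMW).1
  have hM0 : 0 ≤ M := (Finset.mem_filter.mp hMW).2
  have hMc : M ≤ c (k - i) := le_c_of_lev hg (by omega) hMlev hM0
  refine ⟨M, hMlev, hM0, hMc, ?_⟩
  set b := W.min' hne with hb
  have hbW : b ∈ W := W.min'_mem hne
  have hblev : b ∈ lev c k i := (Finset.mem_filter.mp hbW).1
  have hb0 : 0 ≤ b := (Finset.mem_filter.mp hbW).2
  have hbM : b ≤ M := Finset.le_max' _ b hbW
  set l := k - i with hl
  have hgood : ∀ u ∈ W, Good c l u := by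
    intro u hu
    exact (lev_good hg i (by omega) u (Finset.mem_filter.mp hu).1).1
  have hc1 : ∀ j, 1 ≤ j → j ≤ l → 1 ≤ c j := by
    intro j hj1 hj2
    exact c_one_le hg hck hj1 (by omega)
  have hprodpos : (0:ℤ) ≤ ∏ j ∈ Finset.Icc 1 l, (4 * c j) := by
    apply Finset.prod_nonneg
    intro j hj
    have := hc1 j (Finset.mem_Icc.mp hj).1 (Finset.mem_Icc.mp hj).2
    linarith
  set F : ℤ → ℤ := Rad c l with hF
  have hmono : ∀ u ∈ W, ∀ u' ∈ W, u < u' → F u < F u' := by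
    intro u hu u' hu' hlt
    exact (Rad_lip c l hc1 u u' (hgood u hu) (hgood u' hu')
      (Finset.mem_filter.mp hu).2 (le_of_lt hlt)).2.1 hlt
  have hinj : ∀ u ∈ W, ∀ u' ∈ W, F u = F u' → u = u' := by
    intro u hu u' hu' h
    rcases lt_trichotomy u u' with hlt | he | hlt
    · exact absurd h (ne_of_lt (hmono u hu u' hu' hlt))
    · exact he
    · exact absurd h.symm (ne_of_lt (hmono u' hu' u hu hlt))
  have himage : (W.image F).card = W.card := Finset.card_image_of_injOn hinj
  have hsub : W.image F ⊆ Finset.Icc (F b) (F M) := by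
    intro x hx
    obtain ⟨u, hu, rfl⟩ := Finset.mem_image.mp hx
    refine Finset.mem_Icc.mpr ⟨?_, ?_⟩
    · exact (Rad_lip c l hc1 b u (hgood b hbW) (hgood u hu) hb0
        (Finset.min'_le _ u hu)).1
    · exact (Rad_lip c l hc1 u M (hgood u hu) (hgood M hMW)
        (Finset.mem_filter.mp hu).2 (Finset.le_max' _ u hu)).1
  have hcardle := Finset.card_le_card hsub
  rw [himage, Int.card_Icc] at hcardle
  have hFMb : (0:ℤ) ≤ F M - F b :=
    sub_nonneg.mpr (Rad_lip c l hc1 b M (hgood b hbW) (hgood M hMW) hb0 hbM).1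
  have hcardle2 : (W.card : ℤ) ≤ F M + 1 - F b :=
    (Int.le_toNat (by linarith)).mp hcardle
  have hWc : ((2:ℤ) ^ (i - 2)) ≤ (W.card : ℤ) - 1 := by
    have : ((2 ^ (i - 2) + 1 : ℕ) : ℤ) ≤ (W.card : ℤ) := by exact_mod_cast hWcard
    push_cast at this
    linarith
  have hlip := (Rad_lip c l hc1 b M (hgood b hbW) (hgood M hMW) hb0 hbM).2.2
  have h2nn : (0:ℤ) ≤ (2:ℤ) ^ (i - 2) := by positivity
  calc ((2:ℤ) ^ (i - 2)) ^ 2 * ∏ j ∈ Finset.Icc 1 l, (4 * c j)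
      ≤ (F M - F b) ^ 2 * ∏ j ∈ Finset.Icc 1 l, (4 * c j) := by
        refine mul_le_mul_of_nonneg_right (pow_le_pow_left₀ h2nn (by linarith) 2) hprodpos
    _ ≤ (M - b) ^ 2 := hlip
    _ ≤ M ^ 2 := pow_le_pow_left₀ (by linarith) (by linarith) 2

lemma geom_sum : ∀ n : ℕ, ∑ j ∈ Finset.Icc 1 n, 2 ^ j = 2 ^ (n+1) - 2 := by
  intro n
  induction n with
  | zero => simp
  | succ n ih =>
    rw [Finset.sum_Icc_succ_top (by omega), ih]
    have h2 : 2 ≤ 2 ^ (n+1) := by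
      calc 2 = 2 ^ 1 := by norm_num
        _ ≤ 2 ^ (n+1) := Nat.pow_le_pow_right (by norm_num) (by omega)
    omega

lemma c_strong {c : ℕ → ℤ} {k : ℕ} (hg : Good c k 0) (hck : 1 ≤ c k) :
    ∀ l, 1 ≤ l → l + 2 ≤ k → (2:ℤ) ^ ((k - 2) * 2 ^ l) ≤ c l := by
  intro l
  induction l using Nat.strong_induction_on with
  | _ l ih =>
    intro hl1 hlk
    obtain ⟨M, hMlev, hM0, hMc, hMsq⟩ := star hg hck (i := k - l) (by omega) (by omega)
    have hkl : k - (k - l) = l := by omega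
    rw [hkl] at hMc hMsq
    have hclpos : (0:ℤ) < c l := c_one_le hg hck hl1 hlk
    -- split the product
    obtain ⟨l', rfl⟩ : ∃ l', l = l' + 1 := ⟨l - 1, by omega⟩
    have hsplit : ∏ j ∈ Finset.Icc 1 (l'+1), (4 * c j)
        = (∏ j ∈ Finset.Icc 1 l', (4 * c j)) * (4 * c (l'+1)) := by
      rw [Finset.prod_Icc_succ_top (by omega)]
    -- lower bound the partial product
    have hlow : (2:ℤ) ^ (∑ j ∈ Finset.Icc 1 l', ((k-2) * 2 ^ j + 2))
        ≤ ∏ j ∈ Finset.Icc 1 l', (4 * c j) := by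
      rw [← Finset.prod_pow_eq_pow_sum]
      apply Finset.prod_le_prod
      · intro j _; positivity
      · intro j hj
        obtain ⟨hj1, hj2⟩ := Finset.mem_Icc.mp hj
        have hcj := ih j (by omega) (by omega) (by omega)
        have : (2:ℤ) ^ ((k-2) * 2 ^ j + 2) = 2 ^ ((k-2) * 2 ^ j) * 4 := by
          rw [pow_add]; norm_num
        rw [this]
        calc (2:ℤ) ^ ((k-2) * 2 ^ j) * 4 ≤ c j * 4 :=
              mul_le_mul_of_nonneg_right hcj (by norm_num)
          _ = 4 * c j := by ring
    -- exponent bookkeeping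
    have hsum : ∑ j ∈ Finset.Icc 1 l', ((k-2) * 2 ^ j + 2)
        = (k-2) * (2 ^ (l'+1) - 2) + 2 * l' := by
      rw [Finset.sum_add_distrib, ← Finset.mul_sum, geom_sum]
      simp [Finset.sum_const, Nat.card_Icc, mul_comm]
    have hexp : (k - (l'+1) - 2) * 2 + ((k-2) * (2 ^ (l'+1) - 2) + 2 * l') + 2
        = (k - 2) * 2 ^ (l'+1) := by
      obtain ⟨d, hd⟩ : ∃ d, k = (l'+1) + 2 + d := ⟨k - (l'+1) - 2, by omega⟩
      obtain ⟨q, hq⟩ : ∃ q, 2 ^ (l'+1) = q + 2 := ⟨2 ^ (l'+1) - 2, by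
        have : 2 ≤ 2 ^ (l'+1) := by
          calc 2 = 2 ^ 1 := by norm_num
            _ ≤ 2 ^ (l'+1) := Nat.pow_le_pow_right (by norm_num) (by omega)
        omega⟩
      subst hd
      rw [hq]
      have h1 : l' + 1 + 2 + d - (l'+1) - 2 = d := by omega
      have h2 : l' + 1 + 2 + d - 2 = l' + 1 + d := by omega
      rw [h1, h2]
      have h3 : q + 2 - 2 = q := by omega
      rw [h3]
      ring
    -- combine
    have hM2 : M ^ 2 ≤ c (l'+1) * c (l'+1) := by
      have h := pow_le_pow_left₀ hM0 hMc 2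
      calc M ^ 2 ≤ c (l'+1) ^ 2 := h
        _ = c (l'+1) * c (l'+1) := by ring
    have e1 : ((2:ℤ) ^ (k - (l'+1) - 2)) ^ 2 *
        ((2:ℤ) ^ (∑ j ∈ Finset.Icc 1 l', ((k-2) * 2 ^ j + 2)) * (4 * c (l'+1)))
        = (2:ℤ) ^ ((k - (l'+1) - 2) * 2 + (∑ j ∈ Finset.Icc 1 l', ((k-2) * 2 ^ j + 2)) + 2)
          * c (l'+1) := by
      rw [← pow_mul, pow_add, pow_add]
      norm_num
      ring
    have hkey : (2:ℤ) ^ ((k-2) * 2 ^ (l'+1)) * c (l'+1) ≤ c (l'+1) * c (l'+1) := by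
      calc (2:ℤ) ^ ((k-2) * 2 ^ (l'+1)) * c (l'+1)
          = ((2:ℤ) ^ (k - (l'+1) - 2)) ^ 2 *
            ((2:ℤ) ^ (∑ j ∈ Finset.Icc 1 l', ((k-2) * 2 ^ j + 2)) * (4 * c (l'+1))) := by
            rw [e1, hsum, hexp]
        _ ≤ ((2:ℤ) ^ (k - (l'+1) - 2)) ^ 2 *
            ((∏ j ∈ Finset.Icc 1 l', (4 * c j)) * (4 * c (l'+1))) := by
            apply mul_le_mul_of_nonneg_left _ (by positivity)
            apply mul_le_mul_of_nonneg_right hlow (by linarith)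
        _ = ((2:ℤ) ^ (k - (l'+1) - 2)) ^ 2 * ∏ j ∈ Finset.Icc 1 (l'+1), (4 * c j) := by
            rw [hsplit]
        _ ≤ M ^ 2 := hMsq
        _ ≤ c (l'+1) * c (l'+1) := hM2
    exact le_of_mul_le_mul_right (by linarith [hkey]) hclpos

lemma m_bound {c : ℕ → ℤ} {k : ℕ} (hg : Good c k 0) (hck : 1 ≤ c k) (hk : 3 ≤ k) :
    ∃ m : ℤ, 1 ≤ m ∧ m ^ 2 = c k ∧ m ≤ c (k - 1) ∧
      (∏ j ∈ Finset.Icc 1 (k - 2), (4 * c j)) ≤ 4 * m ^ 2 := by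
  classical
  obtain ⟨M, hMlev, hM0, hMc, hMsq⟩ := star hg hck (i := 2) le_rfl (by omega)
  obtain ⟨v, hv, hMv⟩ := lev_sq hg (i := 1) (by omega) M hMlev
  obtain ⟨n', hn'⟩ : ∃ n', k = n' + 1 + 1 := ⟨k - 2, by omega⟩
  subst hn'
  obtain ⟨m, hm0, hm2, hgm, hgmneg⟩ := hg
  have hm2' : m ^ 2 = c (n' + 1 + 1) := by rw [hm2]; ring
  have hm1 : 1 ≤ m := by nlinarith
  obtain ⟨B, hB0, hB2, _, _⟩ := hgmneg
  obtain ⟨a, ha0, ha2, _, _⟩ := hgm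
  have hmc : m ≤ c (n' + 1) := by nlinarith
  -- v ≤ m
  have hvm : v ≤ m := by
    obtain ⟨w, hw, hv'⟩ := Finset.mem_biUnion.mp hv
    have hw0 : w = 0 := by simpa [lev] using hw
    subst hw0
    have hsq : Int.sqrt (c (n' + 1 + 1 - 0) + 0) = m := by
      have hcc : c (n' + 1 + 1 - 0) + 0 = m ^ 2 := by
        rw [Nat.sub_zero, add_zero, hm2']
      rw [hcc, sq, Int.sqrt_eq, Int.natAbs_of_nonneg hm0]
    rw [hsq] at hv'
    rcases Finset.mem_insert.mp hv' with h | h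
    · omega
    · have := Finset.mem_singleton.mp h
      omega
  -- M ≤ a ≤ 2m
  have hMv' : M ^ 2 = c (n' + 1) + v := by
    have : n' + 1 + 1 - 1 = n' + 1 := rfl
    rw [← this]; exact hMv
  have hMa : M ≤ a := by
    by_contra hcon
    push_neg at hcon
    have h1 : a + 1 ≤ M := hcon
    nlinarith [mul_le_mul h1 h1 (by linarith : (0:ℤ) ≤ a + 1) (by linarith : (0:ℤ) ≤ M)]
  have hBa : B < a := by
    by_contra hcon
    push_neg at hcon
    nlinarith [mul_le_mul hcon hcon ha0 hB0]
  have ha2m : a ≤ 2 * m := by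
    have hBa1 : B ≤ a - 1 := by omega
    have hsq : B ^ 2 ≤ (a - 1) ^ 2 := by
      nlinarith [mul_le_mul hBa1 hBa1 hB0 (by linarith : (0:ℤ) ≤ a - 1)]
    nlinarith
  refine ⟨m, hm1, hm2', hmc, ?_⟩
  have h1 : (∏ j ∈ Finset.Icc 1 (n' + 1 + 1 - 2), (4 * c j)) ≤ M ^ 2 := by
    calc (∏ j ∈ Finset.Icc 1 (n' + 1 + 1 - 2), (4 * c j))
        = ((2:ℤ) ^ (2 - 2)) ^ 2 * ∏ j ∈ Finset.Icc 1 (n' + 1 + 1 - 2), (4 * c j) := by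
          norm_num
      _ ≤ M ^ 2 := hMsq
  have h2 : M ^ 2 ≤ 4 * m ^ 2 := by nlinarith
  linarith

lemma msq_lower {c : ℕ → ℤ} {k : ℕ} (hg : Good c k 0) (hck : 1 ≤ c k) (hk : 3 ≤ k)
    {m : ℤ} (hm1 : 1 ≤ m)
    (hprod : (∏ j ∈ Finset.Icc 1 (k - 2), (4 * c j)) ≤ 4 * m ^ 2) :
    (2:ℤ) ^ ((k - 2) * 2 ^ (k - 1) - 2) ≤ m ^ 2 := by
  have hlow : (2:ℤ) ^ (∑ j ∈ Finset.Icc 1 (k-2), ((k-2) * 2 ^ j + 2))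
      ≤ ∏ j ∈ Finset.Icc 1 (k-2), (4 * c j) := by
    rw [← Finset.prod_pow_eq_pow_sum]
    apply Finset.prod_le_prod
    · intro j _; positivity
    · intro j hj
      obtain ⟨hj1, hj2⟩ := Finset.mem_Icc.mp hj
      have hcj := c_strong hg hck j (by omega) (by omega)
      have : (2:ℤ) ^ ((k-2) * 2 ^ j + 2) = 2 ^ ((k-2) * 2 ^ j) * 4 := by
        rw [pow_add]; norm_num
      rw [this]
      calc (2:ℤ) ^ ((k-2) * 2 ^ j) * 4 ≤ c j * 4 :=
            mul_le_mul_of_nonneg_right hcj (by norm_num)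
        _ = 4 * c j := by ring
  have hsum : ∑ j ∈ Finset.Icc 1 (k-2), ((k-2) * 2 ^ j + 2)
      = (k-2) * (2 ^ (k-1) - 2) + 2 * (k-2) := by
    rw [Finset.sum_add_distrib, ← Finset.mul_sum, geom_sum]
    have : k - 2 + 1 = k - 1 := by omega
    rw [this]
    simp [Finset.sum_const, Nat.card_Icc, mul_comm]
  have h2k : 2 ≤ 2 ^ (k-1) := by
    calc 2 = 2 ^ 1 := by norm_num
      _ ≤ 2 ^ (k-1) := Nat.pow_le_pow_right (by norm_num) (by omega)
  have hexp : (k-2) * (2 ^ (k-1) - 2) + 2 * (k-2) = (k-2) * 2 ^ (k-1) := by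
    obtain ⟨q, hq⟩ : ∃ q, 2 ^ (k-1) = q + 2 := ⟨2 ^ (k-1) - 2, by omega⟩
    rw [hq]
    have : q + 2 - 2 = q := by omega
    rw [this]
    ring
  have hfin : (2:ℤ) ^ ((k-2) * 2 ^ (k-1)) ≤ 4 * m ^ 2 := by
    calc (2:ℤ) ^ ((k-2) * 2 ^ (k-1)) = 2 ^ (∑ j ∈ Finset.Icc 1 (k-2), ((k-2) * 2 ^ j + 2)) := by
          rw [hsum, hexp]
      _ ≤ ∏ j ∈ Finset.Icc 1 (k-2), (4 * c j) := hlow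
      _ ≤ 4 * m ^ 2 := hprod
  have hge4 : 4 ≤ (k-2) * 2 ^ (k-1) := by
    have h1 : 1 ≤ k - 2 := by omega
    calc 4 = 1 * 4 := by norm_num
      _ ≤ (k-2) * 2 ^ (k-1) := Nat.mul_le_mul h1 (by
        calc 4 = 2 ^ 2 := by norm_num
          _ ≤ 2 ^ (k-1) := Nat.pow_le_pow_right (by norm_num) (by omega))
  have hsplitexp : (k-2) * 2 ^ (k-1) = ((k-2) * 2 ^ (k-1) - 2) + 2 := by omega
  rw [hsplitexp, pow_add] at hfin
  have : (2:ℤ) ^ 2 = 4 := by norm_num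
  rw [this] at hfin
  nlinarith [hfin]

end SC

lemma SC.nat_ineq {K : ℕ} : (K + 3) * 2 ^ (K + 3) + 26 < 13 * ((K + 1) * 2 ^ (K + 2)) := by
  have hP : 4 ≤ 2 ^ (K + 2) := by
    calc 4 = 2 ^ 2 := by norm_num
      _ ≤ 2 ^ (K + 2) := Nat.pow_le_pow_right (by norm_num) (by omega)
  have hPz : (4:ℤ) ≤ 2 ^ (K + 2) := by exact_mod_cast hP
  have hKz : (0:ℤ) ≤ (K:ℤ) := Int.natCast_nonneg K
  have hgoal : ((K:ℤ) + 3) * 2 ^ (K + 3) + 26 < 13 * (((K:ℤ) + 1) * 2 ^ (K + 2)) := by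
    rw [show (2:ℤ) ^ (K + 3) = 2 * 2 ^ (K + 2) from by rw [pow_succ]; ring]
    nlinarith [mul_nonneg hKz (by linarith : (0:ℤ) ≤ (2:ℤ) ^ (K + 2) - 4)]
  exact_mod_cast hgoal

theorem stmt_15 :
    ∃ lam : ℝ, 0 < lam ∧
      ∀ (k : ℕ) (c : ℕ → ℤ), Crumbles (chain c k) → 3 ≤ k → 0 < c k →
        ∀ j, 1 ≤ j → j ≤ k → Real.log (c j) > lam * k * 2 ^ j := by
  have hlog2 : (0:ℝ) < Real.log 2 := Real.log_pos (by norm_num)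
  refine ⟨Real.log 2 / 13, by positivity, ?_⟩
  intro k c hcr hk3 hck j hj1 hjk
  have hg : SC.Good c k 0 := by
    apply SC.good_of_crumbles
    simpa using hcr
  have hck1 : 1 ≤ c k := hck
  obtain ⟨m, hm1, hm2, hmc, hprod⟩ := SC.m_bound hg hck1 hk3
  have hE : (2:ℤ) ^ ((k - 2) * 2 ^ (k - 1) - 2) ≤ m ^ 2 :=
    SC.msq_lower hg hck1 hk3 hm1 hprod
  -- generic log transfer
  have key : ∀ (x : ℤ) (e : ℕ), (2:ℤ) ^ e ≤ x → (e : ℝ) * Real.log 2 ≤ Real.log (x : ℝ) := by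
    intro x e hx
    have hx0 : (0:ℝ) < (2:ℝ) ^ e := by positivity
    have hxx : ((2:ℝ)) ^ e ≤ (x : ℝ) := by exact_mod_cast hx
    calc (e:ℝ) * Real.log 2 = Real.log ((2:ℝ) ^ e) := by rw [Real.log_pow]
      _ ≤ Real.log (x : ℝ) := Real.log_le_log hx0 hxx
  obtain ⟨K, rfl⟩ : ∃ K, k = K + 3 := ⟨k - 3, by omega⟩
  have hcast2 : ((K + 3 - 2 : ℕ) : ℝ) = (K : ℝ) + 1 := by
    have : K + 3 - 2 = K + 1 := by omega
    rw [this]; push_cast; ring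
  rcases (by omega : j + 2 ≤ K + 3 ∨ j = K + 2 ∨ j = K + 3) with hcase | hcase | hcase
  · -- main case
    have hc := SC.c_strong hg hck1 j hj1 hcase
    have h1 := key (c j) _ hc
    -- cast exponent
    have hcaste : (((K + 3 - 2) * 2 ^ j : ℕ) : ℝ) = ((K : ℝ) + 1) * 2 ^ j := by
      push_cast [show K + 3 - 2 = K + 1 from by omega]
      ring
    rw [hcaste] at h1
    have hK3 : ((K:ℝ) + 3) = ((K + 3 : ℕ) : ℝ) := by push_cast; ring
    have hstrict : Real.log 2 / 13 * ((K + 3 : ℕ) : ℝ) * 2 ^ j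
        < ((K : ℝ) + 1) * 2 ^ j * Real.log 2 := by
      rw [← hK3]
      have hp : (0:ℝ) < (2:ℝ) ^ j * Real.log 2 := by positivity
      have hfrac : ((K:ℝ) + 3) / 13 < (K:ℝ) + 1 := by
        have : (0:ℝ) ≤ (K:ℝ) := Nat.cast_nonneg K
        linarith
      calc Real.log 2 / 13 * ((K:ℝ) + 3) * 2 ^ j
          = (((K:ℝ) + 3) / 13) * ((2:ℝ) ^ j * Real.log 2) := by ring
        _ < ((K:ℝ) + 1) * ((2:ℝ) ^ j * Real.log 2) := by
            exact mul_lt_mul_of_pos_right hfrac hp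
        _ = ((K : ℝ) + 1) * 2 ^ j * Real.log 2 := by ring
    exact lt_of_lt_of_le hstrict h1
  · -- j = k - 1
    subst hcase
    -- log m²  ≥ E log 2
    have h1 := key (m ^ 2) _ hE
    have hm0 : (0:ℝ) < (m:ℝ) := by exact_mod_cast hm1
    have hmsq : ((m ^ 2 : ℤ) : ℝ) = (m:ℝ) ^ 2 := by push_cast; ring
    rw [hmsq, Real.log_pow] at h1
    -- log c (k-1) ≥ log m
    have hc1 : (0:ℝ) < (m : ℝ) := hm0
    have hmcast : ((m : ℤ) : ℝ) ≤ ((c (K + 2) : ℤ) : ℝ) := by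
      exact_mod_cast (show m ≤ c (K + 2) from by
        have : K + 3 - 1 = K + 2 := by omega
        rwa [this] at hmc)
    have h2 : Real.log (m : ℝ) ≤ Real.log (c (K + 2) : ℝ) := Real.log_le_log hc1 hmcast
    -- numeric: (k 2^k)/13 < E/2
    have hEcast : (((K + 3 - 2) * 2 ^ (K + 3 - 1) - 2 : ℕ) : ℝ)
        = ((K:ℝ) + 1) * 2 ^ (K + 2) - 2 := by
      have he1 : (K + 3 - 2) * 2 ^ (K + 3 - 1) = (K + 1) * 2 ^ (K + 2) := by
        congr 1 <;> omega
      rw [he1]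
      have h4 : 2 ≤ (K + 1) * 2 ^ (K + 2) := by
        calc 2 = 1 * 2 := by norm_num
          _ ≤ (K + 1) * 2 ^ (K + 2) := Nat.mul_le_mul (by omega)
              (by calc 2 = 2 ^ 1 := by norm_num
                    _ ≤ 2 ^ (K + 2) := Nat.pow_le_pow_right (by norm_num) (by omega))
      push_cast [Nat.cast_sub h4]
      ring
    rw [hEcast] at h1
    push_cast at h1
    have hnum : ((K + 3 : ℕ) : ℝ) * 2 ^ (K + 3) < 13 * (((K:ℝ) + 1) * 2 ^ (K + 2) - 2) := by
      have h := SC.nat_ineq (K := K)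
      have hR : ((K:ℝ) + 3) * 2 ^ (K + 3) + 26 < 13 * (((K:ℝ) + 1) * 2 ^ (K + 2)) := by
        exact_mod_cast h
      push_cast
      linarith
    -- assemble: goal Real.log (c (K+2)) > log2/13 * (K+3) * 2^(K+2)
    show Real.log ((c (K + 2) : ℤ) : ℝ) > Real.log 2 / 13 * ((K + 3 : ℕ) : ℝ) * 2 ^ (K + 2)
    have hhalf : Real.log 2 / 13 * ((K + 3 : ℕ) : ℝ) * 2 ^ (K + 2)
        < (((K:ℝ) + 1) * 2 ^ (K + 2) - 2) / 2 * Real.log 2 := by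
      have hmul := mul_lt_mul_of_pos_right hnum
        (show (0:ℝ) < Real.log 2 / 26 by positivity)
      calc Real.log 2 / 13 * ((K + 3 : ℕ) : ℝ) * 2 ^ (K + 2)
          = (((K + 3 : ℕ) : ℝ) * 2 ^ (K + 3)) * (Real.log 2 / 26) := by
            rw [show (2:ℝ) ^ (K + 3) = 2 * 2 ^ (K + 2) from by rw [pow_succ]; ring]
            ring
        _ < (13 * (((K:ℝ) + 1) * 2 ^ (K + 2) - 2)) * (Real.log 2 / 26) := hmul
        _ = (((K:ℝ) + 1) * 2 ^ (K + 2) - 2) / 2 * Real.log 2 := by ring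
    have h1' : (((K:ℝ) + 1) * 2 ^ (K + 2) - 2) / 2 * Real.log 2 ≤ Real.log (m : ℝ) := by
      linarith
    linarith
  · -- j = k
    subst hcase
    have h1 := key (m ^ 2) _ hE
    have hmsq : ((m ^ 2 : ℤ) : ℝ) = ((c (K + 3) : ℤ) : ℝ) := by rw [hm2]
    rw [hmsq] at h1
    have hEcast : (((K + 3 - 2) * 2 ^ (K + 3 - 1) - 2 : ℕ) : ℝ)
        = ((K:ℝ) + 1) * 2 ^ (K + 2) - 2 := by
      have he1 : (K + 3 - 2) * 2 ^ (K + 3 - 1) = (K + 1) * 2 ^ (K + 2) := by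
        congr 1 <;> omega
      rw [he1]
      have h4 : 2 ≤ (K + 1) * 2 ^ (K + 2) := by
        calc 2 = 1 * 2 := by norm_num
          _ ≤ (K + 1) * 2 ^ (K + 2) := Nat.mul_le_mul (by omega)
              (by calc 2 = 2 ^ 1 := by norm_num
                    _ ≤ 2 ^ (K + 2) := Nat.pow_le_pow_right (by norm_num) (by omega))
      push_cast [Nat.cast_sub h4]
      ring
    rw [hEcast] at h1
    have hnum : ((K + 3 : ℕ) : ℝ) * 2 ^ (K + 3) < 13 * (((K:ℝ) + 1) * 2 ^ (K + 2) - 2) := by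
      have h := SC.nat_ineq (K := K)
      have hR : ((K:ℝ) + 3) * 2 ^ (K + 3) + 26 < 13 * (((K:ℝ) + 1) * 2 ^ (K + 2)) := by
        exact_mod_cast h
      push_cast
      linarith
    show Real.log ((c (K + 3) : ℤ) : ℝ) > Real.log 2 / 13 * ((K + 3 : ℕ) : ℝ) * 2 ^ (K + 3)
    have hfin : Real.log 2 / 13 * ((K + 3 : ℕ) : ℝ) * 2 ^ (K + 3)
        < (((K:ℝ) + 1) * 2 ^ (K + 2) - 2) * Real.log 2 := by
      have hmul := mul_lt_mul_of_pos_right hnum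
        (show (0:ℝ) < Real.log 2 / 13 by positivity)
      calc Real.log 2 / 13 * ((K + 3 : ℕ) : ℝ) * 2 ^ (K + 3)
          = (((K + 3 : ℕ) : ℝ) * 2 ^ (K + 3)) * (Real.log 2 / 13) := by ring
        _ < (13 * (((K:ℝ) + 1) * 2 ^ (K + 2) - 2)) * (Real.log 2 / 13) := hmul
        _ = (((K:ℝ) + 1) * 2 ^ (K + 2) - 2) * Real.log 2 := by ring
    linarith
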